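/- (Key Lemma for the Quantum Lovász Local Lemma) Let Σ = (ρ; M_1,…,M_n) be a test on a finite-dimensional complex Hilbert space H, let 𝔼 = E_1,…,E_n be events with E_i defined by M_i for each i, and let x_1,…,x_n ∈ (0,1]. For each 1 ≤ i ≤ n set s_i = max{ j < i : NInd_{Σ,𝔼}(i|j) } (with s_i = 0 if no such j exists), and assume Pr_Σ[E_i] ≤ x_i · ∏_{j=s_i+1}^{i−1}(1 − x_j) for all 1 ≤ i ≤ n. Assume moreover that Pr_Σ[Ē_1,…,Ē_{i−1}] ≠ 0 for each 1 ≤ i ≤ n. Then for every 1 ≤ i ≤ n, Pr_Σ[E_i | Ē_1,…,Ē_{i−1}] ≤ x_i. -/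

import Mathlib

open Matrix Finset
open scoped ComplexOrder

/-- A quantum measurement on `ℂ^d`: a finite family of operators indexed by the
outcomes in `spec`, satisfying the completeness condition `∑ Mₘ† Mₘ = I`. -/
structure Measurement (d : ℕ) where
  spec : Finset ℕ
  op : ℕ → Matrix (Fin d) (Fin d) ℂ
  complete : ∑ m ∈ spec, (op m)ᴴ * op m = 1

/-- An event `{M ∈ A}`: a measurement together with a subset of its spectrum. -/
structure QEvent (d : ℕ) where
  meas : Measurement d
  A : Finset ℕ
  sub : A ⊆ meas.spec

/-- The super-operator defined by an event: `ρ ↦ ∑_{m ∈ A} Mₘ ρ Mₘ†`. -/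
noncomputable def QEvent.superop {d : ℕ} (E : QEvent d) (ρ : Matrix (Fin d) (Fin d) ℂ) :
    Matrix (Fin d) (Fin d) ℂ :=
  ∑ m ∈ E.A, E.meas.op m * ρ * (E.meas.op m)ᴴ

/-- The probability of a sequence of events in state `ρ`:
`Pr_ρ[E₁,…,E_k] = tr(𝓔_k(⋯𝓔₁(ρ)⋯))`. -/
noncomputable def PrSeq {d : ℕ} (ρ : Matrix (Fin d) (Fin d) ℂ) (Es : List (QEvent d)) : ℝ :=
  (Matrix.trace (Es.foldl (fun σ E => E.superop σ) ρ)).re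

/-- A density operator: positive semidefinite with trace one. -/
def IsDensityOp {d : ℕ} (ρ : Matrix (Fin d) (Fin d) ℂ) : Prop :=
  ρ.PosSemidef ∧ ρ.trace = 1

/-- A projective measurement: every operator is an orthogonal projection and
distinct operators are orthogonal. -/
def Measurement.IsProjective {d : ℕ} (M : Measurement d) : Prop :=
  (∀ m ∈ M.spec, (M.op m)ᴴ = M.op m ∧ M.op m * M.op m = M.op m) ∧
  ∀ m ∈ M.spec, ∀ m' ∈ M.spec, m ≠ m' → M.op m * M.op m' = 0

/-- The complete event `I_M = {M ∈ spec(M)}`. -/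
def completeEvent {d : ℕ} (M : Measurement d) : QEvent d :=
  ⟨M, M.spec, subset_rfl⟩

/-- The complement `Ē = {M ∈ spec(M) \ A}` of the event `E = {M ∈ A}`. -/
def QEvent.compl {d : ℕ} (E : QEvent d) : QEvent d :=
  ⟨E.meas, E.meas.spec \ E.A, Finset.sdiff_subset⟩

/-- Conditional probability `Pr_ρ[𝔽|𝔼] = Pr_ρ[𝔼,𝔽] / Pr_ρ[𝔼]`. -/
noncomputable def condPrSeq {d : ℕ} (ρ : Matrix (Fin d) (Fin d) ℂ) (Fs Es : List (QEvent d)) : ℝ :=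
  PrSeq ρ (Es ++ Fs) / PrSeq ρ Es

/-- The list of events realizing `Pr_Σ[𝔼_K]` in the test `Σ = (ρ; M₁,…,M_n)`:
all measurements `M₁,…,M_{max K}` are performed; at the indices `i ∈ K` the event
`E i` is used, while at the remaining indices the complete event `I_{M_i}` is used. -/
noncomputable def testList {d : ℕ} (n : ℕ) (Ms : ℕ → Measurement d) (E : ℕ → QEvent d)
    (K : Finset ℕ) : List (QEvent d) :=
  ((List.range' 1 n).filter (fun i => decide (∃ k ∈ K, i ≤ k))).map
    (fun i => if i ∈ K then E i else completeEvent (Ms i))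

/-- The probability `Pr_Σ[𝔼_K]` of the subsequence of events indexed by `K` in the
test `Σ = (ρ; M₁,…,M_n)`. -/
noncomputable def PrTest {d : ℕ} (ρ : Matrix (Fin d) (Fin d) ℂ) (n : ℕ)
    (Ms : ℕ → Measurement d) (E : ℕ → QEvent d) (K : Finset ℕ) : ℝ :=
  PrSeq ρ (testList n Ms E K)

/-- The conditional probability `Pr_Σ[𝔼_L | 𝔼_K]` in a test (for `K < L`, the
concatenation `𝔼_K,𝔼_L` is the subsequence indexed by `K ∪ L`). -/
noncomputable def condPrTest {d : ℕ} (ρ : Matrix (Fin d) (Fin d) ℂ) (n : ℕ)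
    (Ms : ℕ → Measurement d) (E : ℕ → QEvent d) (L K : Finset ℕ) : ℝ :=
  PrTest ρ n Ms E (K ∪ L) / PrTest ρ n Ms E K

/-- Independence `Ind_Σ(E_i | 𝔼_J; 𝔼_{K∖J})`: `Pr_Σ[E_i|𝔼_K] = Pr_Σ[E_i|𝔼_{K∖J}]`. -/
def IndTest {d : ℕ} (ρ : Matrix (Fin d) (Fin d) ℂ) (n : ℕ)
    (Ms : ℕ → Measurement d) (E : ℕ → QEvent d) (i : ℕ) (J K : Finset ℕ) : Prop :=
  condPrTest ρ n Ms E {i} K = condPrTest ρ n Ms E {i} (K \ J)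

/-- Negative independence `NInd_Σ(E_i | 𝔼_K)`: `Pr_Σ[E_i | Ē_K] = Pr_Σ[E_i]`,
where in the conditioning sequence every event of `𝔼_K` is replaced by its complement. -/
def NIndTest {d : ℕ} (ρ : Matrix (Fin d) (Fin d) ℂ) (n : ℕ)
    (Ms : ℕ → Measurement d) (E : ℕ → QEvent d) (i : ℕ) (K : Finset ℕ) : Prop :=
  condPrTest ρ n Ms (Function.update (fun k => (E k).compl) i (E i)) {i} K
    = PrTest ρ n Ms E {i}

/-- `NInd_{Σ,𝔼}(k|l)`: `NInd_Σ(E_k | E₁,…,E_j)` for all `1 ≤ j ≤ l`. -/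
def NIndSeq {d : ℕ} (ρ : Matrix (Fin d) (Fin d) ℂ) (n : ℕ)
    (Ms : ℕ → Measurement d) (E : ℕ → QEvent d) (k l : ℕ) : Prop :=
  ∀ j, 1 ≤ j → j ≤ l → NIndTest ρ n Ms E k (Finset.Icc 1 j)


section QLLLAux

variable {d : ℕ}

lemma superop_psd {F : QEvent d} {σ : Matrix (Fin d) (Fin d) ℂ} (hσ : σ.PosSemidef) :
    (F.superop σ).PosSemidef := by
  unfold QEvent.superop
  refine Finset.sum_induction _ _ (fun a b ha hb => ha.add hb) Matrix.PosSemidef.zero ?_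
  exact fun m _ => hσ.mul_mul_conjTranspose_same _

lemma foldl_psd {σ : Matrix (Fin d) (Fin d) ℂ} (hσ : σ.PosSemidef) (L : List (QEvent d)) :
    (L.foldl (fun σ E => E.superop σ) σ).PosSemidef := by
  induction L generalizing σ with
  | nil => exact hσ
  | cons F t ih => exact ih (superop_psd hσ)

lemma psd_trace_re_nonneg {σ : Matrix (Fin d) (Fin d) ℂ} (hσ : σ.PosSemidef) :
    0 ≤ σ.trace.re := by
  have h : ∀ i, 0 ≤ (σ i i).re := by
    intro i
    have := hσ.re_dotProduct_nonneg (Pi.single i 1)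
    simpa [dotProduct, Matrix.mulVec, Pi.single_apply] using this
  simp only [Matrix.trace, Matrix.diag, Complex.re_sum]
  exact Finset.sum_nonneg fun i _ => h i

lemma PrSeq_nonneg {σ : Matrix (Fin d) (Fin d) ℂ} (hσ : σ.PosSemidef) (L : List (QEvent d)) :
    0 ≤ PrSeq σ L :=
  psd_trace_re_nonneg (foldl_psd hσ L)

lemma superop_add (F : QEvent d) (σ τ : Matrix (Fin d) (Fin d) ℂ) :
    F.superop (σ + τ) = F.superop σ + F.superop τ := by
  simp [QEvent.superop, Matrix.mul_add, Matrix.add_mul, Finset.sum_add_distrib]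

lemma foldl_add (L : List (QEvent d)) (σ τ : Matrix (Fin d) (Fin d) ℂ) :
    L.foldl (fun σ E => E.superop σ) (σ + τ)
      = L.foldl (fun σ E => E.superop σ) σ + L.foldl (fun σ E => E.superop σ) τ := by
  induction L generalizing σ τ with
  | nil => rfl
  | cons F t ih => simp only [List.foldl_cons, superop_add, ih]

lemma PrSeq_add (L : List (QEvent d)) (σ τ : Matrix (Fin d) (Fin d) ℂ) :
    PrSeq (σ + τ) L = PrSeq σ L + PrSeq τ L := by
  simp [PrSeq, foldl_add, Matrix.trace_add]

lemma PrSeq_cons (F : QEvent d) (σ : Matrix (Fin d) (Fin d) ℂ) (L : List (QEvent d)) :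
    PrSeq σ (F :: L) = PrSeq (F.superop σ) L := rfl

lemma PrSeq_append (σ : Matrix (Fin d) (Fin d) ℂ) (L₁ L₂ : List (QEvent d)) :
    PrSeq σ (L₁ ++ L₂) = PrSeq (L₁.foldl (fun σ E => E.superop σ) σ) L₂ := by
  simp [PrSeq, List.foldl_append]

lemma complete_split (F : QEvent d) (σ : Matrix (Fin d) (Fin d) ℂ) :
    (completeEvent F.meas).superop σ = F.superop σ + F.compl.superop σ := by
  unfold QEvent.superop completeEvent QEvent.compl
  simp only
  rw [add_comm, Finset.sum_sdiff F.sub]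

lemma trace_superop_complete (M : Measurement d) (σ : Matrix (Fin d) (Fin d) ℂ) :
    ((completeEvent M).superop σ).trace = σ.trace := by
  unfold QEvent.superop completeEvent
  simp only
  calc (∑ m ∈ M.spec, M.op m * σ * (M.op m)ᴴ).trace
      = ∑ m ∈ M.spec, ((M.op m)ᴴ * (M.op m) * σ).trace := by
        rw [Matrix.trace_sum]
        exact Finset.sum_congr rfl fun m _ => by
          rw [Matrix.trace_mul_cycle, Matrix.mul_assoc]
    _ = ((∑ m ∈ M.spec, (M.op m)ᴴ * M.op m) * σ).trace := by
        rw [Finset.sum_mul, Matrix.trace_sum]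
    _ = σ.trace := by rw [M.complete, Matrix.one_mul]

lemma PrSeq_snoc_complete (σ : Matrix (Fin d) (Fin d) ℂ) (L : List (QEvent d))
    (M : Measurement d) :
    PrSeq σ (L ++ [completeEvent M]) = PrSeq σ L := by
  rw [PrSeq_append]
  simp [PrSeq, trace_superop_complete]

lemma PrSeq_snoc_split (σ : Matrix (Fin d) (Fin d) ℂ) (L : List (QEvent d)) (F : QEvent d) :
    PrSeq σ L = PrSeq σ (L ++ [F]) + PrSeq σ (L ++ [F.compl]) := by
  rw [← PrSeq_snoc_complete σ L F.meas, PrSeq_append, PrSeq_append, PrSeq_append]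
  simp only [PrSeq, List.foldl_cons, List.foldl_nil, complete_split, Matrix.trace_add,
    Complex.add_re]

lemma block_le (L : List (QEvent d)) (E : ℕ → QEvent d) (Ms : ℕ → Measurement d) :
    ∀ (ms : List ℕ) (σ : Matrix (Fin d) (Fin d) ℂ), σ.PosSemidef →
      (∀ j ∈ ms, (E j).meas = Ms j) →
      PrSeq σ (ms.map (fun j => (E j).compl) ++ L)
        ≤ PrSeq σ (ms.map (fun j => completeEvent (Ms j)) ++ L) := by
  intro ms
  induction ms with
  | nil => intro σ _ _; exact le_refl _
  | cons a t ih =>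
    intro σ hσ hm
    simp only [List.map_cons, List.cons_append, PrSeq_cons]
    calc PrSeq ((E a).compl.superop σ) (t.map (fun j => (E j).compl) ++ L)
        ≤ PrSeq ((E a).compl.superop σ) (t.map (fun j => completeEvent (Ms j)) ++ L) :=
          ih _ (superop_psd hσ) (fun j hj => hm j (List.mem_cons_of_mem _ hj))
      _ ≤ PrSeq ((completeEvent (Ms a)).superop σ)
            (t.map (fun j => completeEvent (Ms j)) ++ L) := by
          rw [← hm a ((List.mem_cons_self (a := a) (l := t))), complete_split, PrSeq_add]
          have := PrSeq_nonneg (superop_psd (F := E a) hσ)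
            (t.map (fun j => completeEvent (Ms j)) ++ L)
          linarith

/-- The list of complements `Ē₁,…,Ē_m`. -/
noncomputable def LcL (E : ℕ → QEvent d) (m : ℕ) : List (QEvent d) :=
  (List.range' 1 m).map (fun j => (E j).compl)

lemma LcL_succ (E : ℕ → QEvent d) (m : ℕ) :
    LcL E (m + 1) = LcL E m ++ [(E (m + 1)).compl] := by
  unfold LcL
  have e := List.range'_append_1 (s := 1) (m := m) (n := 1)
  rw [show (1 : ℕ) + m = m + 1 by omega] at e
  rw [← e, List.map_append]
  simp

lemma LcL_split (E : ℕ → QEvent d) (s m : ℕ) (h : s ≤ m) :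
    LcL E m = LcL E s ++ (List.range' (s + 1) (m - s)).map (fun j => (E j).compl) := by
  unfold LcL
  rw [← List.map_append]
  congr 1
  have e := List.range'_append_1 (s := 1) (m := s) (n := m - s)
  rw [show (1 : ℕ) + s = s + 1 by omega, show s + (m - s) = m by omega] at e
  exact e.symm

variable (n : ℕ) (Ms : ℕ → Measurement d)

lemma testList_empty (F : ℕ → QEvent d) : testList n Ms F ∅ = [] := by
  unfold testList
  rw [List.filter_eq_nil_iff.mpr, List.map_nil]
  intro a _
  simp

lemma testList_eq_of_max (F : ℕ → QEvent d) (K : Finset ℕ) (M : ℕ)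
    (hM : M ∈ K) (hmax : ∀ k ∈ K, k ≤ M) (hMn : M ≤ n) :
    testList n Ms F K
      = (List.range' 1 M).map (fun j => if j ∈ K then F j else completeEvent (Ms j)) := by
  unfold testList
  congr 1
  have hsplit : List.range' 1 n = List.range' 1 M ++ List.range' (1 + M) (n - M) := by
    rw [List.range'_append_1]
    congr 1
    omega
  rw [hsplit, List.filter_append]
  have h1 : (List.range' 1 M).filter (fun i => decide (∃ k ∈ K, i ≤ k))
      = List.range' 1 M := by
    rw [List.filter_eq_self]
    intro a ha
    rw [List.mem_range'_1] at ha
    simp only [decide_eq_true_eq]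
    exact ⟨M, hM, by omega⟩
  have h2 : (List.range' (1 + M) (n - M)).filter (fun i => decide (∃ k ∈ K, i ≤ k))
      = [] := by
    rw [List.filter_eq_nil_iff]
    intro a ha
    rw [List.mem_range'_1] at ha
    simp only [decide_eq_true_eq, not_exists, not_and]
    intro k hk
    have := hmax k hk
    omega
  rw [h1, h2, List.append_nil]

lemma testList_Ico (E G : ℕ → QEvent d) (i : ℕ) (h1 : 1 ≤ i) (hn : i - 1 ≤ n)
    (hG : ∀ j, 1 ≤ j → j < i → G j = (E j).compl) :
    testList n Ms G (Finset.Ico 1 i) = LcL E (i - 1) := by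
  rcases Nat.eq_or_lt_of_le h1 with h | h
  · subst h
    simp [testList_empty, LcL]
  · rw [testList_eq_of_max n Ms G _ (i - 1) (by simp; omega) (fun k hk => by
      simp only [Finset.mem_Ico] at hk; omega) hn]
    refine List.map_congr_left fun j hj => ?_
    rw [List.mem_range'_1] at hj
    rw [if_pos (by simp only [Finset.mem_Ico]; omega)]
    exact hG j (by omega) (by omega)

lemma testList_Icc_union (E G : ℕ → QEvent d) (s i : ℕ) (hsi : s < i) (h1 : 1 ≤ i)
    (hn : i ≤ n) (hG : ∀ j, 1 ≤ j → j ≤ s → G j = (E j).compl) :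
    testList n Ms G (Finset.Icc 1 s ∪ {i})
      = LcL E s
        ++ (List.range' (s + 1) (i - 1 - s)).map (fun j => completeEvent (Ms j))
        ++ [G i] := by
  have hmem : ∀ j, j ∈ Finset.Icc 1 s ∪ {i} ↔ (1 ≤ j ∧ j ≤ s) ∨ j = i := by
    intro j; simp [Finset.mem_union, Finset.mem_Icc, or_comm]
  rw [testList_eq_of_max n Ms G _ i (by simp [hmem]) (fun k hk => by
      rw [hmem] at hk; omega) hn]
  have hsplit : List.range' 1 i
      = List.range' 1 s ++ List.range' (s + 1) (i - 1 - s) ++ [i] := by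
    have e1 : List.range' 1 s ++ List.range' (1 + s) (i - 1 - s)
        = List.range' 1 (i - 1 - s + s) := by rw [List.range'_append_1, Nat.add_comm]
    have e2 : List.range' 1 (i - 1) ++ List.range' (1 + (i - 1)) 1
        = List.range' 1 (1 + (i - 1)) := by rw [List.range'_append_1, Nat.add_comm]
    rw [show (1 : ℕ) + s = s + 1 by omega, show i - 1 - s + s = i - 1 by omega] at e1
    rw [show (1 : ℕ) + (i - 1) = i by omega] at e2
    rw [List.append_assoc, ← e2, ← e1]
    simp [List.range'_one]
  rw [hsplit, List.map_append, List.map_append]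
  congr 1
  · congr 1
    · refine List.map_congr_left fun j hj => ?_
      rw [List.mem_range'_1] at hj
      rw [if_pos (by rw [hmem]; omega)]
      exact hG j (by omega) (by omega)
    · refine List.map_congr_left fun j hj => ?_
      rw [List.mem_range'_1] at hj
      rw [if_neg (by rw [hmem]; omega)]
  · simp [hmem]

end QLLLAux

/-- Key Lemma for the Quantum Lovász Local Lemma: with
`s_i = max{ j < i : NInd_{Σ,𝔼}(i|j) }` (`s_i = 0` if no such `j` exists, realized via
`sSup` on `ℕ`), if `Pr_Σ[E_i] ≤ x_i · ∏_{j=s_i+1}^{i−1}(1 − x_j)` for all `1 ≤ i ≤ n`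
and `Pr_Σ[Ē₁,…,Ē_{i−1}] ≠ 0` for each `1 ≤ i ≤ n`, then
`Pr_Σ[E_i | Ē₁,…,Ē_{i−1}] ≤ x_i` for every `1 ≤ i ≤ n`. -/

theorem qlll_key_lemma {d : ℕ} (ρ : Matrix (Fin d) (Fin d) ℂ) (hρ : IsDensityOp ρ)
    (n : ℕ) (Ms : ℕ → Measurement d) (E : ℕ → QEvent d)
    (hE : ∀ k ∈ Finset.Icc 1 n, (E k).meas = Ms k)
    (x : ℕ → ℝ) (hx : ∀ i ∈ Finset.Icc 1 n, x i ∈ Set.Ioc (0 : ℝ) 1)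
    (s : ℕ → ℕ)
    (hs : ∀ i ∈ Finset.Icc 1 n,
      s i = sSup {j : ℕ | 0 < j ∧ j < i ∧ NIndSeq ρ n Ms E i j})
    (hbound : ∀ i ∈ Finset.Icc 1 n,
      PrTest ρ n Ms E {i} ≤ x i * ∏ j ∈ Finset.Ioo (s i) i, (1 - x j))
    (hne : ∀ i ∈ Finset.Icc 1 n,
      PrTest ρ n Ms (fun k => (E k).compl) (Finset.Ico 1 i) ≠ 0) :
    ∀ i ∈ Finset.Icc 1 n,
      condPrTest ρ n Ms (Function.update (fun k => (E k).compl) i (E i)) {i}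
        (Finset.Ico 1 i) ≤ x i := by
  intro i
  induction i using Nat.strong_induction_on with
  | _ i ih =>
  intro hi
  obtain ⟨hi1, hin⟩ := Finset.mem_Icc.mp hi
  -- the denominators are positive
  have hden : ∀ m, 1 ≤ m → m ≤ n → 0 < PrSeq ρ (LcL E (m - 1)) := by
    intro m h1 h2
    have h0 := hne m (Finset.mem_Icc.mpr ⟨h1, h2⟩)
    rw [PrTest, testList_Ico n Ms E (fun k => (E k).compl) m h1 (by omega)
      (fun _ _ _ => rfl)] at h0
    exact lt_of_le_of_ne (PrSeq_nonneg hρ.1 _) (Ne.symm h0)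
  -- numerator bound from the strong induction hypothesis
  have hnum : ∀ m, m + 1 < i →
      PrSeq ρ (LcL E m ++ [E (m + 1)]) ≤ x (m + 1) * PrSeq ρ (LcL E m) := by
    intro m hm
    have hmn : m + 1 ≤ n := by omega
    have hcond := ih (m + 1) hm (Finset.mem_Icc.mpr ⟨by omega, hmn⟩)
    rw [condPrTest, PrTest, PrTest,
      show Finset.Ico 1 (m + 1) ∪ {m + 1} = Finset.Icc 1 m ∪ {m + 1} from by
        ext j
        simp only [Finset.mem_union, Finset.mem_Ico, Finset.mem_Icc, Finset.mem_singleton]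
        omega,
      testList_Icc_union n Ms E (Function.update (fun k => (E k).compl) (m + 1) (E (m + 1))) m (m + 1) (by omega) (by omega) hmn
        (fun j hj1 hj2 => Function.update_of_ne (by omega) _ _),
      testList_Ico n Ms E (Function.update (fun k => (E k).compl) (m + 1) (E (m + 1))) (m + 1) (by omega) (by omega)
        (fun j hj1 hj2 => Function.update_of_ne (by omega) _ _)] at hcond
    simp only [Function.update_self, Nat.add_sub_cancel, Nat.sub_self, List.range'_zero,
      List.map_nil, List.append_nil] at hcond
    have hd := hden (m + 1) (by omega) hmn
    simp only [Nat.add_sub_cancel] at hd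
    exact (div_le_iff₀ hd).mp hcond |>.trans (by rw [mul_comm])
  -- one-step lower bound for the denominators
  have hstep : ∀ m, m + 1 < i →
      (1 - x (m + 1)) * PrSeq ρ (LcL E m) ≤ PrSeq ρ (LcL E (m + 1)) := by
    intro m hm
    have hsp := PrSeq_snoc_split ρ (LcL E m) (E (m + 1))
    have h1 := hnum m hm
    rw [LcL_succ]
    linarith
  -- facts about s i
  have hsfacts : s i < i ∧ (0 < s i → NIndTest ρ n Ms E i (Finset.Icc 1 (s i))) := by
    have hsi := hs i hi
    rcases Set.eq_empty_or_nonempty {j : ℕ | 0 < j ∧ j < i ∧ NIndSeq ρ n Ms E i j} with h | h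
    · rw [h, csSup_empty] at hsi
      simp only [Nat.bot_eq_zero] at hsi
      refine ⟨by omega, fun h0 => absurd hsi (by omega)⟩
    · have hbdd : BddAbove {j : ℕ | 0 < j ∧ j < i ∧ NIndSeq ρ n Ms E i j} :=
        ⟨i, fun j hj => le_of_lt hj.2.1⟩
      have hmem := Nat.sSup_mem h hbdd
      rw [← hsi] at hmem
      obtain ⟨hpos, hlt, hseq⟩ := hmem
      exact ⟨hlt, fun _ => hseq (s i) (by omega) le_rfl⟩
  obtain ⟨hslt, hNInd⟩ := hsfacts
  have hG' : ∀ j, 1 ≤ j → j ≤ s i →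
      Function.update (fun k => (E k).compl) i (E i) j = (E j).compl :=
    fun j hj1 hj2 => Function.update_of_ne (by omega) _ _
  -- Ps : probability of the first s i complements
  have hPs : 0 < PrSeq ρ (LcL E (s i)) := by
    have := hden (s i + 1) (by omega) (by omega)
    simpa using this
  -- the conditional probability given the first s i complements equals Pr[E i]
  have hPicc : PrTest ρ n Ms (Function.update (fun k => (E k).compl) i (E i))
      (Finset.Icc 1 (s i)) = PrSeq ρ (LcL E (s i)) := by
    rw [PrTest, show Finset.Icc 1 (s i) = Finset.Ico 1 (s i + 1) from by
        ext j; simp only [Finset.mem_Icc, Finset.mem_Ico]; omega,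
      testList_Ico n Ms E (Function.update (fun k => (E k).compl) i (E i)) (s i + 1) (by omega) (by omega)
        (fun j hj1 hj2 => Function.update_of_ne (by omega) _ _)]
    simp
  have hPiE : condPrTest ρ n Ms (Function.update (fun k => (E k).compl) i (E i)) {i}
      (Finset.Icc 1 (s i)) = PrTest ρ n Ms E {i} := by
    rcases Nat.eq_zero_or_pos (s i) with h0 | h0
    · rw [condPrTest, h0]
      have l1 : PrTest ρ n Ms (Function.update (fun k => (E k).compl) i (E i))
          (Finset.Icc 1 0 ∪ {i})
          = PrSeq ρ (LcL E 0
              ++ (List.range' (0 + 1) (i - 1 - 0)).map (fun j => completeEvent (Ms j))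
              ++ [E i]) := by
        rw [PrTest, testList_Icc_union n Ms E
          (Function.update (fun k => (E k).compl) i (E i)) 0 i (by omega) hi1 hin
          (fun j hj1 hj2 => absurd (hj1.trans hj2) (by omega)), Function.update_self]
      have l2 : PrTest ρ n Ms E {i}
          = PrSeq ρ (LcL E 0
              ++ (List.range' (0 + 1) (i - 1 - 0)).map (fun j => completeEvent (Ms j))
              ++ [E i]) := by
        rw [PrTest, show ({i} : Finset ℕ) = Finset.Icc 1 0 ∪ {i} from by simp,
          testList_Icc_union n Ms E E 0 i (by omega) hi1 hin
            (fun j hj1 hj2 => absurd (hj1.trans hj2) (by omega))]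
      have hU := l1.trans l2.symm
      have hE0 : PrTest ρ n Ms (Function.update (fun k => (E k).compl) i (E i))
          (Finset.Icc 1 0) = 1 := by
        rw [PrTest, show (Finset.Icc 1 0 : Finset ℕ) = ∅ from by simp, testList_empty]
        simp [PrSeq, hρ.2]
      rw [hU, hE0, div_one]
    · exact hNInd h0
  -- Step A : the numerator is at most Pr[E i] * Ps
  have hA : PrSeq ρ (LcL E (i - 1) ++ [E i])
      ≤ PrTest ρ n Ms E {i} * PrSeq ρ (LcL E (s i)) := by
    have hblock : PrSeq ρ (LcL E (i - 1) ++ [E i])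
        ≤ PrTest ρ n Ms (Function.update (fun k => (E k).compl) i (E i))
            (Finset.Icc 1 (s i) ∪ {i}) := by
      rw [PrTest,
        testList_Icc_union n Ms E (Function.update (fun k => (E k).compl) i (E i))
          (s i) i hslt hi1 hin hG', Function.update_self]
      calc PrSeq ρ (LcL E (i - 1) ++ [E i])
          = PrSeq ((LcL E (s i)).foldl (fun σ E => E.superop σ) ρ)
              ((List.range' (s i + 1) (i - 1 - s i)).map (fun j => (E j).compl) ++ [E i]) := by
            rw [LcL_split E (s i) (i - 1) (by omega), List.append_assoc, PrSeq_append]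
        _ ≤ PrSeq ((LcL E (s i)).foldl (fun σ E => E.superop σ) ρ)
              ((List.range' (s i + 1) (i - 1 - s i)).map (fun j => completeEvent (Ms j))
                ++ [E i]) :=
            block_le [E i] E Ms (List.range' (s i + 1) (i - 1 - s i))
              ((LcL E (s i)).foldl (fun σ E => E.superop σ) ρ) (foldl_psd hρ.1 _)
              (fun j hj => by
                rw [List.mem_range'_1] at hj
                exact hE j (Finset.mem_Icc.mpr ⟨by omega, by omega⟩))
        _ = PrSeq ρ (LcL E (s i)
              ++ (List.range' (s i + 1) (i - 1 - s i)).map (fun j => completeEvent (Ms j))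
              ++ [E i]) := by
            simp [PrSeq, List.foldl_append]
    have heq : PrTest ρ n Ms (Function.update (fun k => (E k).compl) i (E i))
        (Finset.Icc 1 (s i) ∪ {i}) = PrTest ρ n Ms E {i} * PrSeq ρ (LcL E (s i)) := by
      rw [← hPiE, condPrTest, hPicc, div_mul_cancel₀ _ (ne_of_gt hPs)]
    rw [← heq]
    exact hblock
  -- Step B : the denominator is at least (∏ (1 - x j)) * Ps
  have hkey : ∀ t, s i + t ≤ i - 1 →
      (∏ j ∈ Finset.Ioo (s i) (s i + t + 1), (1 - x j)) * PrSeq ρ (LcL E (s i))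
        ≤ PrSeq ρ (LcL E (s i + t)) := by
    intro t
    induction t with
    | zero =>
      intro _
      rw [show Finset.Ioo (s i) (s i + 0 + 1) = ∅ from by
        ext j; simp only [Finset.mem_Ioo, Finset.notMem_empty, iff_false]; omega]
      simp
    | succ t iht =>
      intro ht
      have iht' := iht (by omega)
      have hlt : s i + t + 1 < i := by omega
      obtain ⟨hx0, hx1⟩ := Set.mem_Ioc.mp (hx (s i + t + 1)
        (Finset.mem_Icc.mpr ⟨by omega, by omega⟩))
      have hs2 := hstep (s i + t) hlt
      have hins : Finset.Ioo (s i) (s i + (t + 1) + 1)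
          = insert (s i + t + 1) (Finset.Ioo (s i) (s i + t + 1)) := by
        ext j
        simp only [Finset.mem_Ioo, Finset.mem_insert]
        omega
      rw [hins, Finset.prod_insert (by simp)]
      have hmono : (1 - x (s i + t + 1))
          * ((∏ j ∈ Finset.Ioo (s i) (s i + t + 1), (1 - x j)) * PrSeq ρ (LcL E (s i)))
          ≤ (1 - x (s i + t + 1)) * PrSeq ρ (LcL E (s i + t)) :=
        mul_le_mul_of_nonneg_left iht' (by linarith)
      calc (1 - x (s i + t + 1)) * (∏ j ∈ Finset.Ioo (s i) (s i + t + 1), (1 - x j))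
            * PrSeq ρ (LcL E (s i))
          = (1 - x (s i + t + 1))
            * ((∏ j ∈ Finset.Ioo (s i) (s i + t + 1), (1 - x j)) * PrSeq ρ (LcL E (s i))) := by
            ring
        _ ≤ (1 - x (s i + t + 1)) * PrSeq ρ (LcL E (s i + t)) := hmono
        _ ≤ PrSeq ρ (LcL E (s i + t + 1)) := hs2
  have hB : (∏ j ∈ Finset.Ioo (s i) i, (1 - x j)) * PrSeq ρ (LcL E (s i))
      ≤ PrSeq ρ (LcL E (i - 1)) := by
    have h := hkey (i - 1 - s i) (by omega)
    rw [show s i + (i - 1 - s i) = i - 1 by omega] at h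
    rwa [show i - 1 + 1 = i by omega] at h
  -- assembling
  have hD : 0 < PrSeq ρ (LcL E (i - 1)) := hden i hi1 hin
  rw [condPrTest, PrTest, PrTest,
    show Finset.Ico 1 i ∪ {i} = Finset.Icc 1 (i - 1) ∪ {i} from by
      ext j
      simp only [Finset.mem_union, Finset.mem_Ico, Finset.mem_Icc, Finset.mem_singleton]
      omega,
    testList_Icc_union n Ms E (Function.update (fun k => (E k).compl) i (E i)) (i - 1) i (by omega) hi1 hin
      (fun j hj1 hj2 => Function.update_of_ne (by omega) _ _),
    testList_Ico n Ms E (Function.update (fun k => (E k).compl) i (E i)) i hi1 (by omega)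
      (fun j hj1 hj2 => Function.update_of_ne (by omega) _ _)]
  simp only [Function.update_self, Nat.sub_self, List.range'_zero, List.map_nil,
    List.append_nil]
  rw [div_le_iff₀ hD]
  have hxi0 : 0 ≤ x i := le_of_lt (Set.mem_Ioc.mp (hx i hi)).1
  have hPs' : (0 : ℝ) ≤ PrSeq ρ (LcL E (s i)) := le_of_lt hPs
  calc PrSeq ρ (LcL E (i - 1) ++ [E i])
      ≤ PrTest ρ n Ms E {i} * PrSeq ρ (LcL E (s i)) := hA
    _ ≤ (x i * ∏ j ∈ Finset.Ioo (s i) i, (1 - x j)) * PrSeq ρ (LcL E (s i)) :=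
        mul_le_mul_of_nonneg_right (hbound i hi) hPs'
    _ = x i * ((∏ j ∈ Finset.Ioo (s i) i, (1 - x j)) * PrSeq ρ (LcL E (s i))) := by ring
    _ ≤ x i * PrSeq ρ (LcL E (i - 1)) := mul_le_mul_of_nonneg_left hB hxi0
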